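/- arXiv:1906.04488 — 2 statements merged into one kernel-verified Lean document; each statement's English description precedes it below -/
import Mathlib

section
/- Let S ⊆ 𝒟 be a nonempty finite set and F = F_S. Assume the second-moment bound (1/|S|) Σ_{x∈S} ‖∇ℓ(w,x)‖² ≤ M + M_G‖∇F(w)‖² holds for all w ∈ H. Then for every w ∈ H, the expected loss after one SGD step with a uniformly sampled data point satisfies (1/|S|) Σ_{x∈S} F(w − α∇ℓ(w,x)) ≤ F(w) − γ‖∇F(w)‖² + α²LM/2, where γ = α(1 − (1/2)αLM_G). -/
open Finset InnerProductSpace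

/-- Empirical loss of `ℓ` over the finite set `S`: `F_S(w) = (1/|S|) ∑_{x ∈ S} ℓ(w, x)`. -/
noncomputable def empLoss {H 𝒟 : Type*} (ℓ : H → 𝒟 → ℝ) (S : Finset 𝒟) (w : H) : ℝ :=
  (S.card : ℝ)⁻¹ * ∑ x ∈ S, ℓ w x

lemma my_descent {H : Type*} [NormedAddCommGroup H] [InnerProductSpace ℝ H] [CompleteSpace H]
    (f : H → ℝ) (L : ℝ) (hL : 0 ≤ L) (hf : Differentiable ℝ f)
    (hlip : ∀ w u : H, ‖gradient f w - gradient f u‖ ≤ L * ‖w - u‖)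
    (w u : H) :
    f u ≤ f w + ⟪gradient f w, u - w⟫_ℝ + L / 2 * ‖u - w‖ ^ 2 := by
  set d := u - w with hd
  set c : ℝ → H := fun t => w + t • d with hc
  have hcont : Continuous (gradient f) := by
    apply (LipschitzWith.of_dist_le_mul (K := L.toNNReal) ?_).continuous
    intro a b
    simpa [dist_eq_norm, Real.coe_toNNReal L hL] using hlip a b
  have hline : ∀ t : ℝ, HasDerivAt c d t := by
    intro t
    have := ((hasDerivAt_id t).smul_const d).const_add w
    rw [one_smul] at this; exact this
  have hφ : ∀ t : ℝ, HasDerivAt (fun t => f (c t)) ⟪gradient f (c t), d⟫_ℝ t := by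
    intro t
    have := ((hf (c t)).hasGradientAt.hasFDerivAt).comp_hasDerivAt t (hline t)
    simpa [toDual_apply_apply, Function.comp_def] using this
  set g : ℝ → ℝ := fun t => ⟪gradient f (c t), d⟫_ℝ with hg
  have hgc : Continuous g := by
    apply Continuous.inner (hcont.comp ?_) continuous_const
    exact continuous_const.add (continuous_id.smul continuous_const)
  have key : f u - f w = ∫ t in (0:ℝ)..1, g t := by
    have := intervalIntegral.integral_eq_sub_of_hasDerivAt
      (f := fun t => f (c t)) (f' := g) (a := 0) (b := 1)
      (fun t _ => hφ t) (hgc.intervalIntegrable 0 1)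
    simpa [hc, hd] using this.symm
  have hbound : ∀ t ∈ Set.Icc (0:ℝ) 1, g t ≤ g 0 + L * t * ‖d‖ ^ 2 := by
    intro t ht
    have h1 : g t - g 0 = ⟪gradient f (c t) - gradient f (c 0), d⟫_ℝ := by
      simp [hg, inner_sub_left]
    have h2 : ⟪gradient f (c t) - gradient f (c 0), d⟫_ℝ ≤
        ‖gradient f (c t) - gradient f (c 0)‖ * ‖d‖ := real_inner_le_norm _ _
    have h3 : ‖gradient f (c t) - gradient f (c 0)‖ ≤ L * (t * ‖d‖) := by
      have := hlip (c t) (c 0)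
      have hnc : ‖c t - c 0‖ = t * ‖d‖ := by
        simp [hc, norm_smul, abs_of_nonneg ht.1]
      rw [hnc] at this; exact this
    nlinarith [norm_nonneg d, mul_le_mul_of_nonneg_right h3 (norm_nonneg d)]
  have hint : (∫ t in (0:ℝ)..1, g t) ≤ ∫ t in (0:ℝ)..1, (g 0 + L * t * ‖d‖ ^ 2) := by
    apply intervalIntegral.integral_mono_on zero_le_one (hgc.intervalIntegrable 0 1)
    · exact (Continuous.intervalIntegrable (by continuity) 0 1)
    · exact hbound
  have hval : (∫ t in (0:ℝ)..1, (g 0 + L * t * ‖d‖ ^ 2)) = g 0 + L / 2 * ‖d‖ ^ 2 := by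
    have h1 : (∫ t in (0:ℝ)..1, (g 0 + L * t * ‖d‖ ^ 2))
        = (∫ t in (0:ℝ)..1, g 0) + ∫ t in (0:ℝ)..1, L * t * ‖d‖ ^ 2 := by
      apply intervalIntegral.integral_add
      · exact intervalIntegrable_const
      · exact Continuous.intervalIntegrable (by continuity) 0 1
    have h2 : (∫ t in (0:ℝ)..1, L * t * ‖d‖ ^ 2) = L / 2 * ‖d‖ ^ 2 := by
      have : (∫ t in (0:ℝ)..1, L * t * ‖d‖ ^ 2)
          = (L * ‖d‖ ^ 2) * ∫ t in (0:ℝ)..1, t := by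
        rw [← intervalIntegral.integral_const_mul]
        congr 1; ext t; ring
      rw [this, integral_id]; ring
    rw [h1, h2]; simp
  have hg0 : g 0 = ⟪gradient f w, u - w⟫_ℝ := by simp [hg, hc, hd]
  have := key.le.trans (hint.trans hval.le)
  rw [hg0] at this
  linarith

lemma hasGradientAt_empLoss {H 𝒟 : Type*} [NormedAddCommGroup H] [InnerProductSpace ℝ H]
    [CompleteSpace H] (ℓ : H → 𝒟 → ℝ) (hdiff : ∀ x : 𝒟, Differentiable ℝ (fun w => ℓ w x))
    (S : Finset 𝒟) (w : H) :
    HasGradientAt (empLoss ℓ S)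
      ((S.card : ℝ)⁻¹ • ∑ x ∈ S, gradient (fun v => ℓ v x) w) w := by
  have h1 : HasFDerivAt (fun w => ∑ x ∈ S, ℓ w x)
      (∑ x ∈ S, toDual ℝ H (gradient (fun v => ℓ v x) w)) w :=
    HasFDerivAt.fun_sum fun x _ => ((hdiff x) w).hasGradientAt.hasFDerivAt
  have h2 := h1.const_mul ((S.card : ℝ)⁻¹)
  rw [hasGradientAt_iff_hasFDerivAt]
  have h3 : (toDual ℝ H) ((S.card : ℝ)⁻¹ • ∑ x ∈ S, gradient (fun v => ℓ v x) w)
      = (S.card : ℝ)⁻¹ • ∑ x ∈ S, toDual ℝ H (gradient (fun v => ℓ v x) w) := by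
    simp
  rw [h3]; exact h2
/-- One-step expected descent for SGD with a uniformly sampled data point:
if the second-moment bound holds, then
`E[F(w − α∇ℓ(w,ξ))] ≤ F(w) − γ‖∇F(w)‖² + α²LM/2` with `γ = α(1 − (1/2)αLM_G)`. -/
theorem sgd_one_step_descent
    {H 𝒟 : Type*} [NormedAddCommGroup H] [InnerProductSpace ℝ H] [CompleteSpace H]
    (ℓ : H → 𝒟 → ℝ) (L M MG α γ : ℝ)
    (hL : 0 < L) (hM : 0 ≤ M) (hMG : 1 ≤ MG)
    (hα : 0 < α) (hα2 : α ≤ 2 / (L * MG))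
    (hγ : γ = α * (1 - α * L * MG / 2))
    (hdiff : ∀ x : 𝒟, Differentiable ℝ (fun w => ℓ w x))
    (hLip : ∀ (x : 𝒟) (w u : H),
      ‖gradient (fun v => ℓ v x) w - gradient (fun v => ℓ v x) u‖ ≤ L * ‖w - u‖)
    (S : Finset 𝒟) (hS : S.Nonempty)
    (hsecond : ∀ w : H,
      (S.card : ℝ)⁻¹ * ∑ x ∈ S, ‖gradient (fun v => ℓ v x) w‖ ^ 2
        ≤ M + MG * ‖gradient (empLoss ℓ S) w‖ ^ 2)
    (w : H) :
    (S.card : ℝ)⁻¹ * ∑ x ∈ S, empLoss ℓ S (w - α • gradient (fun v => ℓ v x) w)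
      ≤ empLoss ℓ S w - γ * ‖gradient (empLoss ℓ S) w‖ ^ 2 + α ^ 2 * L * M / 2 := by
  have hn0 : (0:ℝ) < (S.card : ℝ) := by exact_mod_cast Finset.card_pos.mpr hS
  set n : ℝ := (S.card : ℝ) with hn
  set g : 𝒟 → H := fun x => gradient (fun v => ℓ v x) w with hgdef
  set G : H := gradient (empLoss ℓ S) w with hG
  have hgradF : ∀ v : H,
      gradient (empLoss ℓ S) v = (S.card:ℝ)⁻¹ • ∑ x ∈ S, gradient (fun u => ℓ u x) v :=
    fun v => (hasGradientAt_empLoss ℓ hdiff S v).gradient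
  have hFdiff : Differentiable ℝ (empLoss ℓ S) :=
    fun v => (hasGradientAt_empLoss ℓ hdiff S v).differentiableAt
  have hFlip : ∀ a b : H, ‖gradient (empLoss ℓ S) a - gradient (empLoss ℓ S) b‖ ≤ L * ‖a - b‖ := by
    intro a b
    rw [hgradF a, hgradF b, ← smul_sub, ← Finset.sum_sub_distrib]
    rw [norm_smul]
    have h1 : ‖∑ x ∈ S, (gradient (fun u => ℓ u x) a - gradient (fun u => ℓ u x) b)‖
        ≤ ∑ x ∈ S, (L * ‖a - b‖) := by
      refine (norm_sum_le _ _).trans (Finset.sum_le_sum fun x _ => hLip x a b)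
    rw [Finset.sum_const, nsmul_eq_mul] at h1
    have : ‖(S.card:ℝ)⁻¹‖ = n⁻¹ := by
      simp [hn, abs_of_nonneg (inv_nonneg.mpr hn0.le)]
    rw [this]
    calc n⁻¹ * ‖∑ x ∈ S, (gradient (fun u => ℓ u x) a - gradient (fun u => ℓ u x) b)‖
        ≤ n⁻¹ * (n * (L * ‖a - b‖)) :=
          mul_le_mul_of_nonneg_left h1 (inv_nonneg.mpr hn0.le)
      _ = L * ‖a - b‖ := by field_simp
  have hstep : ∀ x ∈ S, empLoss ℓ S (w - α • g x)
      ≤ empLoss ℓ S w - α * ⟪G, g x⟫_ℝ + L * α ^ 2 / 2 * ‖g x‖ ^ 2 := by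
    intro x _
    have hdl := my_descent (empLoss ℓ S) L hL.le hFdiff hFlip w (w - α • g x)
    have he : w - α • g x - w = -(α • g x) := by abel
    rw [he, inner_neg_right, real_inner_smul_right, norm_neg, norm_smul,
      Real.norm_eq_abs, abs_of_nonneg hα.le] at hdl
    calc empLoss ℓ S (w - α • g x)
        ≤ empLoss ℓ S w + -(α * ⟪gradient (empLoss ℓ S) w, g x⟫_ℝ)
          + L / 2 * (α * ‖g x‖) ^ 2 := hdl
      _ = empLoss ℓ S w - α * ⟪G, g x⟫_ℝ + L * α ^ 2 / 2 * ‖g x‖ ^ 2 := by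
          rw [← hG]; ring
  have hGG : ∑ x ∈ S, ⟪G, g x⟫_ℝ = n * ‖G‖ ^ 2 := by
    have h1 : ⟪G, (S.card:ℝ)⁻¹ • ∑ x ∈ S, g x⟫_ℝ = ‖G‖ ^ 2 := by
      rw [← hgradF w, ← hG, real_inner_self_eq_norm_sq]
    rw [real_inner_smul_right, inner_sum] at h1
    have hne : n ≠ 0 := ne_of_gt hn0
    have h2 : n * ((S.card:ℝ)⁻¹ * ∑ x ∈ S, ⟪G, g x⟫_ℝ) = n * ‖G‖ ^ 2 := by rw [h1]
    rw [← h2, ← mul_assoc]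
    rw [show n * (S.card:ℝ)⁻¹ = 1 from mul_inv_cancel₀ hne, one_mul]
  have hsum : ∑ x ∈ S, empLoss ℓ S (w - α • g x)
      ≤ ∑ x ∈ S, (empLoss ℓ S w - α * ⟪G, g x⟫_ℝ + L * α ^ 2 / 2 * ‖g x‖ ^ 2) :=
    Finset.sum_le_sum hstep
  have hre : ∑ x ∈ S, (empLoss ℓ S w - α * ⟪G, g x⟫_ℝ + L * α ^ 2 / 2 * ‖g x‖ ^ 2)
      = n * empLoss ℓ S w - α * (n * ‖G‖ ^ 2)
        + L * α ^ 2 / 2 * ∑ x ∈ S, ‖g x‖ ^ 2 := by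
    rw [Finset.sum_add_distrib, Finset.sum_sub_distrib, Finset.sum_const, nsmul_eq_mul,
      ← Finset.mul_sum, ← Finset.mul_sum, hGG, hn]
  rw [hre] at hsum
  have hQ : n⁻¹ * ∑ x ∈ S, ‖g x‖ ^ 2 ≤ M + MG * ‖G‖ ^ 2 := hsecond w
  have hmain := mul_le_mul_of_nonneg_left hsum (inv_nonneg.mpr hn0.le)
  have hne : n ≠ 0 := ne_of_gt hn0
  have hexp : n⁻¹ * (n * empLoss ℓ S w - α * (n * ‖G‖ ^ 2)
        + L * α ^ 2 / 2 * ∑ x ∈ S, ‖g x‖ ^ 2)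
      = empLoss ℓ S w - α * ‖G‖ ^ 2
        + L * α ^ 2 / 2 * (n⁻¹ * ∑ x ∈ S, ‖g x‖ ^ 2) := by
    field_simp
  rw [hexp] at hmain
  have hLα : 0 ≤ L * α ^ 2 / 2 := by positivity
  have hfinal : L * α ^ 2 / 2 * (n⁻¹ * ∑ x ∈ S, ‖g x‖ ^ 2)
      ≤ L * α ^ 2 / 2 * (M + MG * ‖G‖ ^ 2) := mul_le_mul_of_nonneg_left hQ hLα
  have : (S.card : ℝ)⁻¹ * ∑ x ∈ S, empLoss ℓ S (w - α • g x)
      ≤ empLoss ℓ S w - α * ‖G‖ ^ 2 + L * α ^ 2 / 2 * (M + MG * ‖G‖ ^ 2) := by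
    linarith
  calc (S.card : ℝ)⁻¹ * ∑ x ∈ S, empLoss ℓ S (w - α • g x)
      ≤ empLoss ℓ S w - α * ‖G‖ ^ 2 + L * α ^ 2 / 2 * (M + MG * ‖G‖ ^ 2) := this
    _ = empLoss ℓ S w - γ * ‖G‖ ^ 2 + α ^ 2 * L * M / 2 := by rw [hγ]; ring
end

section
/- Let S ⊆ 𝒟 be a nonempty finite set and F = F_S. Assume: (i) the second-moment bound (1/|S|) Σ_{x∈S} ‖∇ℓ(w,x)‖² ≤ M + M_G‖∇F(w)‖² for all w ∈ H; (ii) w̄ ∈ H is a global minimizer of F, i.e. F(w̄) ≤ F(w) for all w ∈ H; and (iii) F satisfies the Polyak–Łojasiewicz inequality 2c(F(w) − F(w̄)) ≤ ‖∇F(w)‖² for all w ∈ H. Then for every w ∈ H, (1/|S|) Σ_{x∈S} F(w − α∇ℓ(w,x)) − F(w̄) ≤ (1 − 2γc)(F(w) − F(w̄)) + α²LM/2. -/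
open Finset

section Aux

open InnerProductSpace intervalIntegral

variable {H 𝒟 : Type*} [NormedAddCommGroup H] [InnerProductSpace ℝ H] [CompleteSpace H]

lemma grad_inner' (f : H → ℝ) (x v : H) :
    ⟪gradient f x, v⟫_ℝ = fderiv ℝ f x v := by
  simp [gradient, toDual_symm_apply]

/-- Descent lemma: if `f` is differentiable with `L`-Lipschitz gradient, then
`f y ≤ f x + ⟪∇f(x), y - x⟫ + (L/2)‖y - x‖²`. -/
lemma descent_lemma (f : H → ℝ) (L : ℝ) (hL : 0 ≤ L) (hf : Differentiable ℝ f)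
    (hLip : ∀ w u : H, ‖gradient f w - gradient f u‖ ≤ L * ‖w - u‖) (x y : H) :
    f y ≤ f x + ⟪gradient f x, y - x⟫_ℝ + L / 2 * ‖y - x‖ ^ 2 := by
  set v := y - x with hv
  have hgradLip : LipschitzWith (Real.toNNReal L) (gradient f) := by
    apply LipschitzWith.of_dist_le_mul
    intro a b
    rw [dist_eq_norm, dist_eq_norm, Real.coe_toNNReal _ hL]
    exact hLip a b
  have hline : ∀ t : ℝ, HasDerivAt (fun s : ℝ => x + s • v) v t := fun t => by
    simpa using ((hasDerivAt_id t).smul_const v).const_add x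
  set φ : ℝ → ℝ := fun t => ⟪gradient f (x + t • v), v⟫_ℝ with hφ
  have hg : ∀ t : ℝ, HasDerivAt (fun s => f (x + s • v)) (φ t) t := by
    intro t
    have h1 := ((hf (x + t • v)).hasFDerivAt).comp_hasDerivAt t (hline t)
    simpa [hφ, grad_inner', Function.comp_def] using h1
  have hφcont : Continuous φ := by
    apply Continuous.inner
    · exact hgradLip.continuous.comp (by continuity)
    · exact continuous_const
  have hftc : ∫ t in (0:ℝ)..1, φ t = f (x + (1:ℝ) • v) - f (x + (0:ℝ) • v) := by
    apply integral_eq_sub_of_hasDerivAt (fun t _ => hg t)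
    exact hφcont.intervalIntegrable 0 1
  have hy : x + (1:ℝ) • v = y := by rw [hv]; rw [one_smul]; abel
  have hx0 : x + (0:ℝ) • v = x := by rw [zero_smul, add_zero]
  have hφ0 : φ 0 = ⟪gradient f x, v⟫_ℝ := by rw [hφ]; simp
  have hbound : ∀ t ∈ Set.Icc (0:ℝ) 1, φ t - φ 0 ≤ (L * ‖v‖ ^ 2) * t := by
    intro t ht
    have h1 : φ t - φ 0 = ⟪gradient f (x + t • v) - gradient f (x + (0:ℝ) • v), v⟫_ℝ := by
      rw [inner_sub_left]
    rw [h1]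
    calc ⟪gradient f (x + t • v) - gradient f (x + (0:ℝ) • v), v⟫_ℝ
        ≤ ‖gradient f (x + t • v) - gradient f (x + (0:ℝ) • v)‖ * ‖v‖ := real_inner_le_norm _ _
      _ ≤ (L * ‖(x + t • v) - (x + (0:ℝ) • v)‖) * ‖v‖ := by
          have := hLip (x + t • v) (x + (0:ℝ) • v)
          nlinarith [norm_nonneg v]
      _ = (L * ‖v‖ ^ 2) * t := by
          have : (x + t • v) - (x + (0:ℝ) • v) = t • v := by
            rw [zero_smul, add_zero]; abel
          rw [this, norm_smul, Real.norm_eq_abs, abs_of_nonneg ht.1]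
          ring
  have hint1 : IntervalIntegrable (fun t => φ t - φ 0) MeasureTheory.volume 0 1 :=
    (hφcont.sub continuous_const).intervalIntegrable 0 1
  have hint2 : IntervalIntegrable (fun t => (L * ‖v‖ ^ 2) * t) MeasureTheory.volume 0 1 :=
    (continuous_const.mul continuous_id).intervalIntegrable 0 1
  have hmono : ∫ t in (0:ℝ)..1, (φ t - φ 0) ≤ ∫ t in (0:ℝ)..1, (L * ‖v‖ ^ 2) * t := by
    apply integral_mono_on (by norm_num) hint1 hint2
    intro t ht; exact hbound t ht
  have hrhs : ∫ t in (0:ℝ)..1, (L * ‖v‖ ^ 2) * t = L / 2 * ‖v‖ ^ 2 := by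
    rw [intervalIntegral.integral_const_mul, integral_id]
    ring
  have hlhs : ∫ t in (0:ℝ)..1, (φ t - φ 0) = (f y - f x) - φ 0 := by
    rw [intervalIntegral.integral_sub (hφcont.intervalIntegrable 0 1)
      (continuous_const.intervalIntegrable 0 1)]
    rw [hftc, hy, hx0]
    simp
  rw [hlhs, hrhs, hφ0] at hmono
  linarith

lemma gradient_empLoss (ℓ : H → 𝒟 → ℝ) (S : Finset 𝒟)
    (hdiff : ∀ x : 𝒟, Differentiable ℝ (fun w => ℓ w x)) (w : H) :
    gradient (empLoss ℓ S) w
      = (S.card : ℝ)⁻¹ • ∑ x ∈ S, gradient (fun v => ℓ v x) w := by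
  have hsum : DifferentiableAt ℝ (fun w => ∑ x ∈ S, ℓ w x) w :=
    DifferentiableAt.fun_sum (fun x _ => (hdiff x) w)
  have h1 : fderiv ℝ (empLoss ℓ S) w
      = (S.card : ℝ)⁻¹ • ∑ x ∈ S, fderiv ℝ (fun v => ℓ v x) w := by
    have h0 : empLoss ℓ S = fun w => (S.card : ℝ)⁻¹ * ∑ x ∈ S, ℓ w x := rfl
    rw [h0, fderiv_const_mul hsum, fderiv_fun_sum (fun x _ => (hdiff x) w)]
  unfold gradient
  rw [h1, map_smul, map_sum]

lemma empLoss_differentiable (ℓ : H → 𝒟 → ℝ) (S : Finset 𝒟)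
    (hdiff : ∀ x : 𝒟, Differentiable ℝ (fun w => ℓ w x)) :
    Differentiable ℝ (empLoss ℓ S) := by
  intro w
  exact (DifferentiableAt.fun_sum (fun x _ => (hdiff x) w)).const_mul _

end Aux

open scoped InnerProductSpace

/-- One-step expected contraction for SGD under the second-moment bound,
global minimality of `w̄` and the Polyak–Łojasiewicz inequality:
`E[F(w − α∇ℓ(w,ξ))] − F(w̄) ≤ (1 − 2γc)(F(w) − F(w̄)) + α²LM/2`. -/
theorem sgd_one_step_contraction
    {H 𝒟 : Type*} [NormedAddCommGroup H] [InnerProductSpace ℝ H] [CompleteSpace H]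
    (ℓ : H → 𝒟 → ℝ) (L M MG α γ c : ℝ)
    (hL : 0 < L) (hM : 0 ≤ M) (hMG : 1 ≤ MG)
    (hα : 0 < α) (hα2 : α ≤ 2 / (L * MG))
    (hγ : γ = α * (1 - α * L * MG / 2))
    (hc : 0 < c)
    (hdiff : ∀ x : 𝒟, Differentiable ℝ (fun w => ℓ w x))
    (hLip : ∀ (x : 𝒟) (w u : H),
      ‖gradient (fun v => ℓ v x) w - gradient (fun v => ℓ v x) u‖ ≤ L * ‖w - u‖)
    (S : Finset 𝒟) (hS : S.Nonempty)
    (hsecond : ∀ w : H,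
      (S.card : ℝ)⁻¹ * ∑ x ∈ S, ‖gradient (fun v => ℓ v x) w‖ ^ 2
        ≤ M + MG * ‖gradient (empLoss ℓ S) w‖ ^ 2)
    (wbar : H) (hmin : ∀ w : H, empLoss ℓ S wbar ≤ empLoss ℓ S w)
    (hPL : ∀ w : H,
      2 * c * (empLoss ℓ S w - empLoss ℓ S wbar) ≤ ‖gradient (empLoss ℓ S) w‖ ^ 2)
    (w : H) :
    (S.card : ℝ)⁻¹ * ∑ x ∈ S, empLoss ℓ S (w - α • gradient (fun v => ℓ v x) w)
        - empLoss ℓ S wbar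
      ≤ (1 - 2 * γ * c) * (empLoss ℓ S w - empLoss ℓ S wbar) + α ^ 2 * L * M / 2 := by
  set F := empLoss ℓ S with hF
  set c0 : ℝ := (S.card : ℝ)⁻¹ with hc0def
  set G := gradient F w with hG
  set g : 𝒟 → H := fun x => gradient (fun v => ℓ v x) w with hg
  have hcardpos : (0:ℝ) < S.card := by
    exact_mod_cast Finset.card_pos.mpr hS
  have hc0pos : 0 < c0 := inv_pos.mpr hcardpos
  have hc0card : c0 * (S.card : ℝ) = 1 := inv_mul_cancel₀ (ne_of_gt hcardpos)
  -- F is differentiable with L-Lipschitz gradient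
  have hFdiff : Differentiable ℝ F := empLoss_differentiable ℓ S hdiff
  have hFgrad : ∀ u : H, gradient F u = c0 • ∑ x ∈ S, gradient (fun v => ℓ v x) u :=
    fun u => gradient_empLoss ℓ S hdiff u
  have hFLip : ∀ u v : H, ‖gradient F u - gradient F v‖ ≤ L * ‖u - v‖ := by
    intro u v
    rw [hFgrad u, hFgrad v, ← smul_sub, ← Finset.sum_sub_distrib, norm_smul]
    have h1 : ‖c0‖ = c0 := by
      rw [Real.norm_eq_abs, abs_of_pos hc0pos]
    rw [h1]
    calc c0 * ‖∑ x ∈ S, (gradient (fun v' => ℓ v' x) u - gradient (fun v' => ℓ v' x) v)‖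
        ≤ c0 * ∑ x ∈ S, ‖gradient (fun v' => ℓ v' x) u - gradient (fun v' => ℓ v' x) v‖ := by
          apply mul_le_mul_of_nonneg_left (norm_sum_le _ _) hc0pos.le
      _ ≤ c0 * ∑ _x ∈ S, L * ‖u - v‖ := by
          apply mul_le_mul_of_nonneg_left _ hc0pos.le
          exact Finset.sum_le_sum (fun x _ => hLip x u v)
      _ = L * ‖u - v‖ := by
          rw [Finset.sum_const, nsmul_eq_mul]
          calc c0 * ((S.card : ℝ) * (L * ‖u - v‖)) = (c0 * S.card) * (L * ‖u - v‖) := by ring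
            _ = L * ‖u - v‖ := by rw [hc0card]; ring
  -- descent lemma applied at each sample point
  have key : ∀ x ∈ S, F (w - α • g x)
      ≤ F w - α * ⟪G, g x⟫_ℝ + L / 2 * (α ^ 2 * ‖g x‖ ^ 2) := by
    intro x _
    have hd := descent_lemma F L hL.le hFdiff hFLip w (w - α • g x)
    have he : (w - α • g x) - w = -(α • g x) := by abel
    rw [he] at hd
    have h1 : ⟪G, -(α • g x)⟫_ℝ = -(α * ⟪G, g x⟫_ℝ) := by
      rw [inner_neg_right, real_inner_smul_right]
    have h2 : ‖-(α • g x)‖ ^ 2 = α ^ 2 * ‖g x‖ ^ 2 := by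
      rw [norm_neg, norm_smul, Real.norm_eq_abs, abs_of_pos hα, mul_pow]
    rw [h1, h2] at hd
    calc F (w - α • g x) ≤ F w + -(α * ⟪G, g x⟫_ℝ) + L / 2 * (α ^ 2 * ‖g x‖ ^ 2) := hd
      _ = F w - α * ⟪G, g x⟫_ℝ + L / 2 * (α ^ 2 * ‖g x‖ ^ 2) := by ring
  -- sum the descent inequalities
  have hsum : ∑ x ∈ S, F (w - α • g x)
      ≤ (S.card : ℝ) * F w - α * ∑ x ∈ S, ⟪G, g x⟫_ℝ
        + L / 2 * α ^ 2 * ∑ x ∈ S, ‖g x‖ ^ 2 := by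
    calc ∑ x ∈ S, F (w - α • g x)
        ≤ ∑ x ∈ S, (F w - α * ⟪G, g x⟫_ℝ + L / 2 * (α ^ 2 * ‖g x‖ ^ 2)) :=
          Finset.sum_le_sum key
      _ = (S.card : ℝ) * F w - α * ∑ x ∈ S, ⟪G, g x⟫_ℝ
            + L / 2 * α ^ 2 * ∑ x ∈ S, ‖g x‖ ^ 2 := by
          rw [Finset.sum_add_distrib, Finset.sum_sub_distrib, Finset.sum_const, nsmul_eq_mul,
            ← Finset.mul_sum, ← Finset.mul_sum, ← Finset.mul_sum]
          ring
  -- the averaged inner product is ‖G‖²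
  have hGinner : c0 * ∑ x ∈ S, ⟪G, g x⟫_ℝ = ‖G‖ ^ 2 := by
    rw [← inner_sum, ← real_inner_smul_right, ← hFgrad w, ← hG, real_inner_self_eq_norm_sq]
  -- multiply by c0
  have hmain : c0 * ∑ x ∈ S, F (w - α • g x)
      ≤ F w - α * ‖G‖ ^ 2 + L / 2 * α ^ 2 * (c0 * ∑ x ∈ S, ‖g x‖ ^ 2) := by
    have h1 := mul_le_mul_of_nonneg_left hsum hc0pos.le
    have h2 : c0 * ((S.card : ℝ) * F w - α * ∑ x ∈ S, ⟪G, g x⟫_ℝ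
          + L / 2 * α ^ 2 * ∑ x ∈ S, ‖g x‖ ^ 2)
        = F w - α * ‖G‖ ^ 2 + L / 2 * α ^ 2 * (c0 * ∑ x ∈ S, ‖g x‖ ^ 2) := by
      linear_combination (F w) * hc0card - α * hGinner
    linarith [h1, h2.ge, h2.le]
  -- second moment bound
  have hsecg : c0 * ∑ x ∈ S, ‖g x‖ ^ 2 ≤ M + MG * ‖G‖ ^ 2 := hsecond w
  -- γ is nonnegative
  have hLMG : 0 < L * MG := mul_pos hL (lt_of_lt_of_le one_pos hMG)
  have hαLMG : α * (L * MG) ≤ 2 := by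
    rw [← le_div_iff₀ hLMG]; exact hα2
  have hγnn : 0 ≤ γ := by
    rw [hγ]; nlinarith
  -- PL inequality
  have hpl : 2 * c * (F w - F wbar) ≤ ‖G‖ ^ 2 := hPL w
  have hplγ : γ * (2 * c * (F w - F wbar)) ≤ γ * ‖G‖ ^ 2 :=
    mul_le_mul_of_nonneg_left hpl hγnn
  have hhalf : 0 ≤ L / 2 * α ^ 2 := by positivity
  have hsec2 : L / 2 * α ^ 2 * (c0 * ∑ x ∈ S, ‖g x‖ ^ 2)
      ≤ L / 2 * α ^ 2 * (M + MG * ‖G‖ ^ 2) :=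
    mul_le_mul_of_nonneg_left hsecg hhalf
  -- combine everything
  have hγeq : γ = α - α ^ 2 * L * MG / 2 := by rw [hγ]; ring
  nlinarith [hmain, hsec2, hplγ, sq_nonneg ‖G‖]
end
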